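/- arXiv:2512.05888 — 10 statements merged into one kernel-verified Lean document; each statement's English description precedes it below -/
import Mathlib

section
/- Let p, v, a, ω : ℝ → ℝ³ and R : ℝ → ℝ^{3×3} be functions, μ > 0, and suppose that at every time t the trajectory satisfies ṗ(t) = v(t), v̇(t) = R(t)a(t) + g(p(t)) with p(t) ≠ 0, and Ṙ(t) = R(t)[ω(t)]× (in the sense of HasDerivAt for matrix- and vector-valued functions). Define X(t) as the SE₂(3)-embedding of (R(t), v(t), p(t)), M(t) = (0, g(p(t)), 0)∧, and N(t) = (0, a(t), ω(t))∧. Then X satisfies the mixed-invariant equation Ẋ(t) = (M(t) − C)·X(t) + X(t)·(N(t) + C) at every time t. -/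
noncomputable section
open Matrix

/-- ℝ³ with the Euclidean norm. -/
abbrev V3 := EuclideanSpace ℝ (Fin 3)

/-- The skew-symmetric cross-product matrix `[w]×`. -/
def skew (w : V3) : Matrix (Fin 3) (Fin 3) ℝ :=
  !![0, -w 2, w 1;
     w 2, 0, -w 0;
     -w 1, w 0, 0]

/-- The wedge map of `ξ = (ξ_p, ξ_v, ξ_R)` into `𝔰𝔢₂(3) ⊂ ℝ^{5×5}`. -/
def wedge (ξp ξv ξR : V3) : Matrix (Fin 5) (Fin 5) ℝ :=
  !![0, -ξR 2, ξR 1, ξv 0, ξp 0;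
     ξR 2, 0, -ξR 0, ξv 1, ξp 1;
     -ξR 1, ξR 0, 0, ξv 2, ξp 2;
     0, 0, 0, 0, 0;
     0, 0, 0, 0, 0]

/-- The SE₂(3)-embedding `[R v p; 0 1 0; 0 0 1]`. -/
def se23 (R : Matrix (Fin 3) (Fin 3) ℝ) (v p : V3) : Matrix (Fin 5) (Fin 5) ℝ :=
  !![R 0 0, R 0 1, R 0 2, v 0, p 0;
     R 1 0, R 1 1, R 1 2, v 1, p 1;
     R 2 0, R 2 1, R 2 2, v 2, p 2;
     0, 0, 0, 1, 0;
     0, 0, 0, 0, 1]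

/-- The constant matrix `C`: a single 1 in row 4, column 5. -/
def Cmat : Matrix (Fin 5) (Fin 5) ℝ :=
  !![0, 0, 0, 0, 0;
     0, 0, 0, 0, 0;
     0, 0, 0, 0, 0;
     0, 0, 0, 0, 1;
     0, 0, 0, 0, 0]

/-- The inverse-square gravity field `g(x) = -μ‖x‖⁻³ x`. -/
def grav (μ : ℝ) (x : V3) : V3 := (-(μ / ‖x‖ ^ 3)) • x

/-- The cross product on ℝ³. -/
def cross3 (a b : V3) : V3 :=
  WithLp.toLp 2 ![a 1 * b 2 - a 2 * b 1, a 2 * b 0 - a 0 * b 2, a 0 * b 1 - a 1 * b 0]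

/-- The SO(3) left Jacobian. -/
def Jl (φ : V3) : Matrix (Fin 3) (Fin 3) ℝ :=
  1 + ((1 - Real.cos ‖φ‖) / ‖φ‖ ^ 2) • skew φ
    + ((‖φ‖ - Real.sin ‖φ‖) / ‖φ‖ ^ 3) • (skew φ ^ 2)

/-- The SO(3) inverse right Jacobian. -/
def Jrinv (φ : V3) : Matrix (Fin 3) (Fin 3) ℝ :=
  1 + (1 / 2 : ℝ) • skew φ
    + ((‖φ‖ ^ 2)⁻¹ - (1 + Real.cos ‖φ‖) / (2 * ‖φ‖ * Real.sin ‖φ‖)) • (skew φ ^ 2)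

attribute [local instance] Matrix.normedAddCommGroup Matrix.normedSpace

set_option maxHeartbeats 2000000 in
/-- the thrusting-spacecraft dynamics embed in SE₂(3) in
mixed-invariant form `Ẋ = (M − C)X + X(N + C)`. -/
theorem spacecraft_mixed_invariant
    (μ : ℝ) (hμ : 0 < μ)
    (p v a ω : ℝ → V3) (R : ℝ → Matrix (Fin 3) (Fin 3) ℝ)
    (hp : ∀ t, HasDerivAt p (v t) t)
    (hpne : ∀ t, p t ≠ 0)
    (hv : ∀ t, HasDerivAt v (Matrix.toEuclideanLin (R t) (a t) + grav μ (p t)) t)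
    (hR : ∀ t, HasDerivAt R (R t * skew (ω t)) t) :
    ∀ t, HasDerivAt (fun s => se23 (R s) (v s) (p s))
      ((wedge 0 (grav μ (p t)) 0 - Cmat) * se23 (R t) (v t) (p t)
        + se23 (R t) (v t) (p t) * (wedge 0 (a t) (ω t) + Cmat)) t := by
  intro t
  have hRe : ∀ i j, HasDerivAt (fun s => R s i j) ((R t * skew (ω t)) i j) t :=
    fun i j => hasDerivAt_pi.1 (hasDerivAt_pi.1 (hR t) i) j
  have hpe : ∀ i, HasDerivAt (fun s => p s i) (v t i) t := by
    intro i; exact (EuclideanSpace.proj i).hasFDerivAt.comp_hasDerivAt t (hp t)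
  have hve : ∀ i, HasDerivAt (fun s => v s i)
      ((Matrix.toEuclideanLin (R t) (a t) + grav μ (p t)) i) t := by
    intro i; exact (EuclideanSpace.proj i).hasFDerivAt.comp_hasDerivAt t (hv t)
  apply hasDerivAt_pi.2; intro i
  apply hasDerivAt_pi.2; intro j
  fin_cases i <;> fin_cases j <;>
    simp [se23, wedge, Cmat, grav, Matrix.mul_apply, Fin.sum_univ_five,
      Matrix.vecHead, Matrix.vecTail, -PiLp.smul_apply] <;>
  solve
    | (norm_num; exact hasDerivAt_const t _)
    | (convert hpe _ using 1; (all_goals try rfl); try simp [Matrix.vecHead, Matrix.vecTail]; try ring)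
    | (convert hRe _ _ using 1; (all_goals try rfl);
        try simp [skew, Matrix.mul_apply, Fin.sum_univ_three, Matrix.vecHead, Matrix.vecTail]; try ring)
    | (convert hve _ using 1; (all_goals try rfl);
        try simp [grav, Matrix.toEuclideanLin_apply, Matrix.mulVec, dotProduct,
          Fin.sum_univ_three, PiLp.add_apply, PiLp.smul_apply,
          smul_eq_mul, Matrix.vecHead, Matrix.vecTail]; try ring)
end
end

section
/- Let X, X̄, M, M̄, N, N̄ : ℝ → ℝ^{5×5} be matrix-valued functions with X and X̄ differentiable, X(t) and X̄(t) invertible for all t, satisfying Ẋ = (M − C)X + X(N + C) and Ẋ̄ = (M̄ − C)X̄ + X̄(N̄ + C) pointwise (HasDerivAt). Set η = X⁻¹X̄, M̃ = M̄ − M, Ñ = N̄ − N. Then at every time t, η⁻¹η̇ = X̄⁻¹M̃X̄ + (N̄ − η⁻¹N̄η) + η⁻¹Ñη + (C − η⁻¹Cη). -/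
noncomputable section
open Matrix

section linfty
open Filter
attribute [local instance] Matrix.linftyOpNormedAddCommGroup Matrix.linftyOpNormedRing
  Matrix.linftyOpNormedAlgebra

lemma key_slope_inv_mul (X Xb : ℝ → Matrix (Fin 5) (Fin 5) ℝ)
    (X' Xb' : Matrix (Fin 5) (Fin 5) ℝ) (t : ℝ)
    (hXinv : IsUnit (X t))
    (hX : Tendsto (slope X t) (nhdsWithin t {t}ᶜ) (nhds X'))
    (hXb : Tendsto (slope Xb t) (nhdsWithin t {t}ᶜ) (nhds Xb')) :
    Tendsto (slope (fun s => (X s)⁻¹ * Xb s) t) (nhdsWithin t {t}ᶜ)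
      (nhds (-((X t)⁻¹ * X' * (X t)⁻¹) * Xb t + (X t)⁻¹ * Xb')) := by
  refine hasDerivAt_iff_tendsto_slope.mp ?_
  replace hX := hasDerivAt_iff_tendsto_slope.mpr hX
  replace hXb := hasDerivAt_iff_tendsto_slope.mpr hXb
  have hinv : HasDerivAt (fun s => (X s)⁻¹) (-((X t)⁻¹ * X' * (X t)⁻¹)) t := by
    have h1 : HasDerivAt (fun s => Ring.inverse (X s))
        (-(ContinuousLinearMap.mulLeftRight ℝ _ (↑hXinv.unit⁻¹) (↑hXinv.unit⁻¹)) X') t :=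
      (hasFDerivAt_ringInverse hXinv.unit).comp_hasDerivAt t hX
    simp only [ContinuousLinearMap.neg_apply, ContinuousLinearMap.mulLeftRight_apply,
      Matrix.coe_units_inv, IsUnit.unit_spec] at h1
    simpa only [Matrix.nonsing_inv_eq_ringInverse, neg_mul, mul_assoc] using h1
  exact hinv.mul hXb
end linfty

attribute [local instance] Matrix.normedAddCommGroup Matrix.normedSpace

/-- the left-trivialized error dynamics
`η⁻¹η̇ = X̄⁻¹M̃X̄ + (N̄ − η⁻¹N̄η) + η⁻¹Ñη + (C − η⁻¹Cη)`. -/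
theorem left_trivialized_error_dynamics
    (X Xb M Mb N Nb : ℝ → Matrix (Fin 5) (Fin 5) ℝ)
    (hXinv : ∀ t, IsUnit (X t))
    (hXbinv : ∀ t, IsUnit (Xb t))
    (hX : ∀ t, HasDerivAt X ((M t - Cmat) * X t + X t * (N t + Cmat)) t)
    (hXb : ∀ t, HasDerivAt Xb ((Mb t - Cmat) * Xb t + Xb t * (Nb t + Cmat)) t) :
    ∀ t, ((X t)⁻¹ * Xb t)⁻¹ * deriv (fun s => (X s)⁻¹ * Xb s) t
      = (Xb t)⁻¹ * (Mb t - M t) * Xb t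
        + (Nb t - ((X t)⁻¹ * Xb t)⁻¹ * Nb t * ((X t)⁻¹ * Xb t))
        + ((X t)⁻¹ * Xb t)⁻¹ * (Nb t - N t) * ((X t)⁻¹ * Xb t)
        + (Cmat - ((X t)⁻¹ * Xb t)⁻¹ * Cmat * ((X t)⁻¹ * Xb t)) := by
  intro t
  have hder : HasDerivAt (fun s => (X s)⁻¹ * Xb s)
      (-((X t)⁻¹ * ((M t - Cmat) * X t + X t * (N t + Cmat)) * (X t)⁻¹) * Xb t
        + (X t)⁻¹ * ((Mb t - Cmat) * Xb t + Xb t * (Nb t + Cmat))) t := by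
    refine hasDerivAt_iff_tendsto_slope.mpr ?_
    exact key_slope_inv_mul X Xb _ _ t (hXinv t)
      (hasDerivAt_iff_tendsto_slope.mp (hX t))
      (hasDerivAt_iff_tendsto_slope.mp (hXb t))
  rw [show deriv (fun s => (X s)⁻¹ * Xb s) t = _ from hder.deriv]
  have hAdet : IsUnit (X t).det := (Matrix.isUnit_iff_isUnit_det _).mp (hXinv t)
  have hBdet : IsUnit (Xb t).det := (Matrix.isUnit_iff_isUnit_det _).mp (hXbinv t)
  simp only [Matrix.mul_inv_rev, Matrix.nonsing_inv_nonsing_inv _ hAdet]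
  simp only [mul_add, add_mul, mul_sub, sub_mul, mul_neg, neg_mul, mul_assoc,
    Matrix.mul_nonsing_inv_cancel_left _ _ hAdet, Matrix.nonsing_inv_mul_cancel_left _ _ hAdet,
    Matrix.mul_nonsing_inv_cancel_left _ _ hBdet, Matrix.nonsing_inv_mul_cancel_left _ _ hBdet,
    Matrix.mul_nonsing_inv _ hAdet, Matrix.nonsing_inv_mul _ hAdet,
    Matrix.mul_nonsing_inv _ hBdet, Matrix.nonsing_inv_mul _ hBdet, mul_one, one_mul]
  abel
end
end

section
/- Let η be the SE₂(3)-embedding of (R, v, p) with R an orthogonal 3×3 real matrix (RᵀR = I). Then η is invertible and C − η⁻¹Cη = (0, 0, Rᵀv)∧ᵖᵒˢ, i.e. C − η⁻¹Cη equals the wedge of the coordinate vector with position component Rᵀv and zero velocity and rotation components. In particular C − η⁻¹Cη lies in the image of the wedge map, even though C itself does not. -/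
noncomputable section
open Matrix

set_option maxHeartbeats 1000000

/-- for `η` an SE₂(3)-embedding with orthogonal rotation block,
`η` is invertible and `C − η⁻¹Cη = (Rᵀv, 0, 0)∧`, which lies in the image of
the wedge map even though `C` itself does not. -/
theorem C_conjugation_in_wedge_image
    (R : Matrix (Fin 3) (Fin 3) ℝ) (v p : V3) (hR : Rᵀ * R = 1) :
    IsUnit (se23 R v p) ∧
    Cmat - (se23 R v p)⁻¹ * Cmat * se23 R v p
      = wedge (Matrix.toEuclideanLin Rᵀ v) 0 0 ∧
    ∀ ξp ξv ξR : V3, Cmat ≠ wedge ξp ξv ξR := by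
  have h : ∀ i j, R 0 i * R 0 j + (R 1 i * R 1 j + R 2 i * R 2 j)
      = if i = j then (1:ℝ) else 0 := by
    intro i j
    have := congrFun (congrFun hR i) j
    simpa [Matrix.mul_apply, Fin.sum_univ_succ, Matrix.one_apply, Matrix.transpose_apply]
      using this
  have h00 := h 0 0; have h01 := h 0 1; have h02 := h 0 2
  have h10 := h 1 0; have h11 := h 1 1; have h12 := h 1 2
  have h20 := h 2 0; have h21 := h 2 1; have h22 := h 2 2
  norm_num [Fin.ext_iff] at h00 h01 h02 h10 h11 h12 h20 h21 h22
  set N : Matrix (Fin 5) (Fin 5) ℝ :=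
    !![R 0 0, R 1 0, R 2 0, -(R 0 0 * v 0 + R 1 0 * v 1 + R 2 0 * v 2),
         -(R 0 0 * p 0 + R 1 0 * p 1 + R 2 0 * p 2);
       R 0 1, R 1 1, R 2 1, -(R 0 1 * v 0 + R 1 1 * v 1 + R 2 1 * v 2),
         -(R 0 1 * p 0 + R 1 1 * p 1 + R 2 1 * p 2);
       R 0 2, R 1 2, R 2 2, -(R 0 2 * v 0 + R 1 2 * v 1 + R 2 2 * v 2),
         -(R 0 2 * p 0 + R 1 2 * p 1 + R 2 2 * p 2);
       0, 0, 0, 1, 0;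
       0, 0, 0, 0, 1] with hN
  have hNη : N * se23 R v p = 1 := by
    ext i j
    fin_cases i <;> fin_cases j <;>
      simp [hN, se23, Matrix.mul_apply, Fin.sum_univ_succ, Matrix.one_apply] <;>
      first
        | ring1
        | linear_combination h00
        | linear_combination h01
        | linear_combination h02
        | linear_combination h10
        | linear_combination h11
        | linear_combination h12
        | linear_combination h20
        | linear_combination h21
        | linear_combination h22
  have hu : IsUnit (se23 R v p) := (Matrix.isUnit_iff_isUnit_det _).mpr (Matrix.isUnit_det_of_left_inverse hNη)
  have hinv : (se23 R v p)⁻¹ = N := Matrix.inv_eq_left_inv hNη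
  refine ⟨hu, ?_, ?_⟩
  · rw [hinv]
    have ht : ∀ k : Fin 3, Matrix.toEuclideanLin Rᵀ v k = Rᵀ.mulVec v k := by
      intro k; simp [Matrix.toEuclideanLin, Matrix.mulVec]
    have hz : ∀ k : Fin 3, (0 : V3) k = 0 := fun _ => rfl
    ext i j
    fin_cases i <;> fin_cases j <;>
      simp [hN, se23, Cmat, wedge, Matrix.mul_apply, Fin.sum_univ_succ, ht, hz,
        Matrix.vecHead, Matrix.vecTail, Function.comp,
        Matrix.mulVec, dotProduct, Matrix.transpose_apply] <;> ring
  · intro ξp ξv ξR hc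
    have := congrFun (congrFun hc 3) 4
    simp [Cmat, wedge] at this
end
end

section
/- Let μ > 0 and x ∈ ℝ³ with x ≠ 0 (Euclidean norm and inner product). The operator norm of the linear map u ↦ −μ‖x‖⁻³ u + 3μ‖x‖⁻⁵⟨x, u⟩ x (the Fréchet derivative of the inverse-square gravity field at x) equals 2μ/‖x‖³. -/
noncomputable section
open Matrix

/-- the operator norm of the gravity-field derivative
`u ↦ −μ‖x‖⁻³ u + 3μ‖x‖⁻⁵⟨x, u⟩ x` equals `2μ/‖x‖³`. -/
theorem grav_deriv_opNorm (μ : ℝ) (hμ : 0 < μ) (x : V3) (hx : x ≠ 0) :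
    ‖(-(μ / ‖x‖ ^ 3)) • ContinuousLinearMap.id ℝ V3
        + (3 * μ / ‖x‖ ^ 5) • (innerSL ℝ x).smulRight x‖ = 2 * μ / ‖x‖ ^ 3 := by
  have hxn : (0:ℝ) < ‖x‖ := norm_pos_iff.mpr hx
  set c : ℝ := μ / ‖x‖ ^ 3 with hc
  have hcpos : 0 < c := div_pos hμ (by positivity)
  set d : ℝ := 3 * μ / ‖x‖ ^ 5 with hd
  set A := (-(μ / ‖x‖ ^ 3)) • ContinuousLinearMap.id ℝ V3
        + (3 * μ / ‖x‖ ^ 5) • (innerSL ℝ x).smulRight x with hA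
  have hAu : ∀ u : V3, A u = (-c) • u + (d * (inner ℝ x u : ℝ)) • x := by
    intro u
    simp [hA, hc, hd, ContinuousLinearMap.smul_apply, smul_smul]
  have hdval : d = 3 * c / ‖x‖ ^ 2 := by
    rw [hd, hc]; field_simp
  apply le_antisymm
  · apply ContinuousLinearMap.opNorm_le_bound _ (by positivity)
    intro u
    set t : ℝ := (inner ℝ x u : ℝ) with ht
    have ht2 : t ^ 2 ≤ ‖x‖ ^ 2 * ‖u‖ ^ 2 := by
      have h1 : |t| ≤ ‖x‖ * ‖u‖ := abs_real_inner_le_norm x u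
      calc t ^ 2 = |t| ^ 2 := (sq_abs t).symm
        _ ≤ (‖x‖ * ‖u‖) ^ 2 := by
            apply pow_le_pow_left₀ (abs_nonneg _) h1
        _ = ‖x‖ ^ 2 * ‖u‖ ^ 2 := by ring
    have hsq : ‖A u‖ ^ 2 ≤ (2 * μ / ‖x‖ ^ 3 * ‖u‖) ^ 2 := by
      rw [hAu u, norm_add_sq_real]
      have hinner : (inner ℝ ((-c) • u) ((d * t) • x) : ℝ) = -c * (d * t) * t := by
        rw [real_inner_smul_left, real_inner_smul_right, real_inner_comm]
        ring
      rw [hinner, norm_smul, norm_smul]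
      have hxx : ‖x‖ ^ 2 > 0 := by positivity
      have key : d ^ 2 * ‖x‖ ^ 2 - 2 * c * d = 3 * c ^ 2 / ‖x‖ ^ 2 := by
        rw [hdval]; field_simp; ring
      have expand : (‖(-c)‖ * ‖u‖) ^ 2 + 2 * (-c * (d * t) * t) + (‖d * t‖ * ‖x‖) ^ 2
          = c ^ 2 * ‖u‖ ^ 2 + t ^ 2 * (d ^ 2 * ‖x‖ ^ 2 - 2 * c * d) := by
        rw [norm_neg, Real.norm_eq_abs, Real.norm_eq_abs]
        rw [mul_pow, mul_pow, sq_abs, sq_abs, mul_pow]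
        ring
      rw [expand, key]
      have h2 : t ^ 2 * (3 * c ^ 2 / ‖x‖ ^ 2) ≤ 3 * c ^ 2 * ‖u‖ ^ 2 := by
        rw [div_eq_mul_inv, ← mul_assoc]
        have : t ^ 2 * (3 * c ^ 2) ≤ ‖x‖ ^ 2 * ‖u‖ ^ 2 * (3 * c ^ 2) := by
          apply mul_le_mul_of_nonneg_right ht2 (by positivity)
        calc t ^ 2 * (3 * c ^ 2) * (‖x‖ ^ 2)⁻¹
            ≤ ‖x‖ ^ 2 * ‖u‖ ^ 2 * (3 * c ^ 2) * (‖x‖ ^ 2)⁻¹ :=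
              mul_le_mul_of_nonneg_right this (by positivity)
          _ = 3 * c ^ 2 * ‖u‖ ^ 2 := by field_simp
      have h3 : (2 * μ / ‖x‖ ^ 3 * ‖u‖) ^ 2 = 4 * c ^ 2 * ‖u‖ ^ 2 := by
        rw [hc]; ring
      rw [h3]
      nlinarith [sq_nonneg c, sq_nonneg ‖u‖]
    have := pow_le_pow_left₀ (norm_nonneg (A u)) (le_refl ‖A u‖) 2
    have hnn : (0:ℝ) ≤ 2 * μ / ‖x‖ ^ 3 * ‖u‖ := by positivity
    exact (pow_le_pow_iff_left₀ (norm_nonneg _) hnn (two_ne_zero)).mp hsq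
  · have hax : A x = (2 * c) • x := by
      rw [hAu x, real_inner_self_eq_norm_sq, hdval]
      rw [← add_smul]
      congr 1
      field_simp
      ring
    have h1 := A.le_opNorm x
    rw [hax, norm_smul, Real.norm_eq_abs, abs_of_pos (by positivity : (0:ℝ) < 2 * c)] at h1
    have h2 : 2 * c ≤ ‖A‖ := le_of_mul_le_mul_right h1 hxn
    calc 2 * μ / ‖x‖ ^ 3 = 2 * c := by rw [hc]; ring
      _ ≤ ‖A‖ := h2
end
end

section
/- Let μ > 0 and p, p̄ ∈ ℝ³ with p̄ ≠ 0. Set r = ‖p̄‖ and d = ‖p̄ − p‖, and assume d < r. Then ‖g(p̄) − g(p)‖ ≤ μ d (2r − d) / (r² (r − d)²). -/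
noncomputable section
open Matrix

lemma keylem (u a b : ℝ) (hu : 0 ≤ u) (ha : 0 ≤ a) (hb : 0 ≤ b) (hab : a ≤ 2*b) :
    0 ≤ -3*a*u^5 - 3*a^2*u^4 - a^3*u^3 + 6*b*u^5 + 6*a*b*u^4 + 4*a^2*b*u^3 + a^3*b*u^2
      + 12*b^2*u^4 + 18*a*b^2*u^3 + 12*a^2*b^2*u^2 + 3*a^3*b^2*u + 4*b^3*u^3
      + 6*a*b^3*u^2 + 4*a^2*b^3*u + a^3*b^3 := by
  have hc : 0 ≤ 2*b - a := by linarith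
  have h1 : 0 ≤ (2*b - a) * (u^3*(3*u^2+3*a*u+a^2)) := by
    apply mul_nonneg hc; positivity
  nlinarith [h1, mul_nonneg (mul_nonneg (mul_nonneg ha ha) hb) (pow_nonneg hu 3),
    mul_nonneg (mul_nonneg (mul_nonneg (mul_nonneg ha ha) ha) hb) (pow_nonneg hu 2),
    mul_nonneg (mul_nonneg hb hb) (pow_nonneg hu 4),
    mul_nonneg (mul_nonneg ha (mul_nonneg hb hb)) (pow_nonneg hu 3),
    mul_nonneg (mul_nonneg (mul_nonneg ha ha) (mul_nonneg hb hb)) (pow_nonneg hu 2),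
    mul_nonneg (mul_nonneg (mul_nonneg (mul_nonneg ha ha) ha) (mul_nonneg hb hb)) hu,
    mul_nonneg (mul_nonneg (mul_nonneg hb hb) hb) (pow_nonneg hu 3),
    mul_nonneg (mul_nonneg ha (mul_nonneg (mul_nonneg hb hb) hb)) (pow_nonneg hu 2),
    mul_nonneg (mul_nonneg (mul_nonneg ha ha) (mul_nonneg (mul_nonneg hb hb) hb)) hu,
    mul_nonneg (mul_nonneg (mul_nonneg ha ha) ha) (mul_nonneg (mul_nonneg hb hb) hb)]

lemma Elem (r s u : ℝ) (hu : 0 < u) (hur : u ≤ r) (hus : u ≤ s) (hs : s ≤ 2*r - u) :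
    u^4*(s^4 + r^4 - r*s*(r^2 + s^2 - (r-u)^2)) ≤ s^4*(r^2 - u^2)^2 := by
  have h := keylem u (s-u) (r-u) hu.le (by linarith) (by linarith) (by linarith)
  nlinarith [h, mul_nonneg (mul_nonneg (hu.trans_le hur).le (sub_nonneg.2 hus)) h]

/-- gravity-difference bound
`‖g(p̄) − g(p)‖ ≤ μ d (2r − d) / (r² (r − d)²)` where `r = ‖p̄‖`, `d = ‖p̄ − p‖`. -/
theorem gravity_difference_bound (μ : ℝ) (hμ : 0 < μ) (p pb : V3) (hpb : pb ≠ 0)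
    (hd : ‖pb - p‖ < ‖pb‖) :
    ‖grav μ pb - grav μ p‖
      ≤ μ * ‖pb - p‖ * (2 * ‖pb‖ - ‖pb - p‖)
          / (‖pb‖ ^ 2 * (‖pb‖ - ‖pb - p‖) ^ 2) := by
  set r := ‖pb‖ with hr_def
  set d := ‖pb - p‖ with hd_def
  set s := ‖p‖ with hs_def
  have hr : 0 < r := norm_pos_iff.2 hpb
  have hd0 : 0 ≤ d := norm_nonneg _
  have hu : 0 < r - d := by linarith
  have hs1 : r - d ≤ s := by
    have := norm_sub_norm_le pb p; linarith
  have hs2 : s ≤ r + d := by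
    have h : p = pb - (pb - p) := by abel
    calc s = ‖pb - (pb - p)‖ := by rw [← h]
    _ ≤ r + d := norm_sub_le _ _
  have hs0 : 0 < s := lt_of_lt_of_le hu hs1
  have hip : (inner ℝ pb p : ℝ) = (r^2 + s^2 - d^2)/2 := by
    have := norm_sub_sq_real pb p
    rw [← hd_def, ← hr_def, ← hs_def] at this
    linarith
  have hnormsq : ‖grav μ pb - grav μ p‖^2
      = μ^2 * (s^4 + r^4 - r*s*(r^2 + s^2 - d^2)) / (r^4 * s^4) := by
    have h1 := norm_sub_sq_real (grav μ pb) (grav μ p)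
    have h2 : (inner ℝ (grav μ pb) (grav μ p) : ℝ) = (-(μ / r^3)) * ((-(μ / s^3)) * (inner ℝ pb p : ℝ)) := by
      rw [grav, grav, real_inner_smul_left, real_inner_smul_right]
    have h3 : ‖grav μ pb‖ = (μ / r^3) * r := by
      rw [grav, norm_smul, Real.norm_eq_abs, abs_neg,
        abs_of_nonneg (by positivity : (0:ℝ) ≤ μ / r^3)]
    have h4 : ‖grav μ p‖ = (μ / s^3) * s := by
      rw [grav, norm_smul, Real.norm_eq_abs, abs_neg,
        abs_of_nonneg (by positivity : (0:ℝ) ≤ μ / s^3)]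
    rw [h1, h2, h3, h4, hip]
    field_simp
    ring
  have hrhs : 0 ≤ μ * d * (2*r - d) / (r^2 * (r-d)^2) := by
    apply div_nonneg _ (by positivity)
    apply mul_nonneg (by positivity); linarith
  have hsqle : ‖grav μ pb - grav μ p‖^2 ≤ (μ * d * (2*r - d) / (r^2 * (r-d)^2))^2 := by
    rw [hnormsq, div_pow, div_le_div_iff₀ (by positivity) (by positivity)]
    have hE := Elem r s (r - d) hu (by linarith) hs1 (by linarith)
    nlinarith [mul_le_mul_of_nonneg_left hE (by positivity : (0:ℝ) ≤ μ^2 * r^4),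
      sq_nonneg μ, hr, hs0]
  calc ‖grav μ pb - grav μ p‖ = Real.sqrt (‖grav μ pb - grav μ p‖^2) := by
        rw [Real.sqrt_sq (norm_nonneg _)]
    _ ≤ Real.sqrt ((μ * d * (2*r - d) / (r^2 * (r-d)^2))^2) := Real.sqrt_le_sqrt hsqle
    _ = μ * d * (2*r - d) / (r^2 * (r-d)^2) := Real.sqrt_sq hrhs
end
end

section
/- Let φ ∈ ℝ³ with θ = ‖φ‖ satisfying 0 < θ < π, and define the SO(3) inverse right Jacobian J_r⁻¹(φ) = I + (1/2)[φ]× + (1/θ² − (1 + cos θ)/(2θ sin θ))([φ]×)². Then the operator norm of J_r⁻¹(φ), as a linear map on Euclidean ℝ³, satisfies ‖J_r⁻¹(φ)‖ ≤ (θ/2)/sin(θ/2). -/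
noncomputable section
open Matrix

lemma normsq3 (y : V3) : ‖y‖^2 = y 0^2 + y 1^2 + y 2^2 := by
  rw [EuclideanSpace.norm_eq, Real.sq_sqrt (by positivity)]
  simp [Fin.sum_univ_three, Real.norm_eq_abs, sq_abs]

lemma mulVec_form0 (φ x : V3) (c : ℝ) :
    (1 + (1/2:ℝ) • skew φ + c • (skew φ^2)).mulVec x 0 =
      x 0 + (1/2) * (φ 1 * x 2 - φ 2 * x 1)
        + c * (φ 0 * (φ 0 * x 0 + φ 1 * x 1 + φ 2 * x 2) - (φ 0^2 + φ 1^2 + φ 2^2) * x 0) := by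
  simp [skew, Matrix.mulVec, dotProduct, Fin.sum_univ_three, pow_two,
    Matrix.mul_apply, Matrix.add_apply, Matrix.smul_apply, Matrix.one_apply]
  ring
lemma mulVec_form1 (φ x : V3) (c : ℝ) :
    (1 + (1/2:ℝ) • skew φ + c • (skew φ^2)).mulVec x 1 =
      x 1 + (1/2) * (φ 2 * x 0 - φ 0 * x 2)
        + c * (φ 1 * (φ 0 * x 0 + φ 1 * x 1 + φ 2 * x 2) - (φ 0^2 + φ 1^2 + φ 2^2) * x 1) := by
  simp [skew, Matrix.mulVec, dotProduct, Fin.sum_univ_three, pow_two,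
    Matrix.mul_apply, Matrix.add_apply, Matrix.smul_apply, Matrix.one_apply]
  ring
lemma mulVec_form2 (φ x : V3) (c : ℝ) :
    (1 + (1/2:ℝ) • skew φ + c • (skew φ^2)).mulVec x 2 =
      x 2 + (1/2) * (φ 0 * x 1 - φ 1 * x 0)
        + c * (φ 2 * (φ 0 * x 0 + φ 1 * x 1 + φ 2 * x 2) - (φ 0^2 + φ 1^2 + φ 2^2) * x 2) := by
  simp [skew, Matrix.mulVec, dotProduct, Fin.sum_univ_three, pow_two,
    Matrix.mul_apply, Matrix.add_apply, Matrix.smul_apply, Matrix.one_apply]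
  ring

lemma cauchy3 (a b c u v w : ℝ) :
    (a*u + b*v + c*w)^2 ≤ (a^2+b^2+c^2)*(u^2+v^2+w^2) := by
  nlinarith [sq_nonneg (a*v - b*u), sq_nonneg (a*w - c*u), sq_nonneg (b*w - c*v)]

lemma sq_le_step (a b : ℝ) (ha : 0 ≤ a) (hb : 0 ≤ b) (h : a^2 ≤ b^2) : a ≤ b := by
  nlinarith

lemma key_alg (c s n d Y M : ℝ) (hs : 0 < s) (hM1 : 1 ≤ M)
    (hM2 : (1 - c*s)^2 + s/4 = M^2) (hd : d^2 ≤ s*n)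
    (hY : Y = (1-c*s)^2*n + (2*c - c^2*s)*d^2 + (s*n - d^2)/4) : Y ≤ M^2 * n := by
  have h3 : s*(2*c - c^2*s - 1/4) = 1 - M^2 := by linear_combination -hM2
  have h4 : 2*c - c^2*s - 1/4 ≤ 0 := by nlinarith
  have h5 : M^2*n = (1-c*s)^2*n + s*n/4 := by linear_combination -n*hM2
  nlinarith [mul_nonpos_of_nonneg_of_nonpos (sq_nonneg d) h4]


set_option maxHeartbeats 2000000 in
/-- the operator norm of the SO(3) inverse right Jacobian is at
most `(θ/2)/sin(θ/2)` for `0 < θ = ‖φ‖ < π`. -/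
theorem Jrinv_opNorm_bound (φ : V3) (hθ0 : 0 < ‖φ‖) (hθπ : ‖φ‖ < Real.pi) :
    ‖(Matrix.toEuclideanLin (Jrinv φ)).toContinuousLinearMap‖
      ≤ (‖φ‖ / 2) / Real.sin (‖φ‖ / 2) := by
  have hsinh : 0 < Real.sin (‖φ‖ / 2) :=
    Real.sin_pos_of_pos_of_lt_pi (by linarith) (by linarith [Real.pi_pos])
  have hcosh : 0 < Real.cos (‖φ‖ / 2) :=
    Real.cos_pos_of_mem_Ioo ⟨by linarith [Real.pi_pos], by linarith⟩
  have hsin : 0 < Real.sin ‖φ‖ := Real.sin_pos_of_pos_of_lt_pi hθ0 hθπ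
  set t := ‖φ‖ with ht
  set M : ℝ := (t / 2) / Real.sin (t / 2) with hMdef
  have hM1 : 1 ≤ M := by
    rw [hMdef, le_div_iff₀ hsinh, one_mul]
    exact Real.sin_le (by linarith)
  have hM0 : 0 ≤ M := by linarith
  set c : ℝ := (t ^ 2)⁻¹ - (1 + Real.cos t) / (2 * t * Real.sin t) with hc
  have hs2 : Real.sin t = 2 * Real.sin (t/2) * Real.cos (t/2) := by
    rw [← Real.sin_two_mul]; ring_nf
  have hc2 : 1 + Real.cos t = 2 * Real.cos (t/2)^2 := by
    have h := Real.cos_sq (t/2)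
    rw [show 2*(t/2) = t from by ring] at h; linarith
  have hpyth := Real.sin_sq_add_cos_sq (t/2)
  have ha : 1 - c*t^2 = t * Real.cos (t/2) / (2 * Real.sin (t/2)) := by
    rw [hc, hs2, hc2]
    field_simp
    ring
  have hM2 : (1 - c*t^2)^2 + t^2/4 = M^2 := by
    rw [ha, hMdef]
    field_simp
    linear_combination 4 * hpyth
  have ht2 : t^2 = φ 0^2 + φ 1^2 + φ 2^2 := normsq3 φ
  apply ContinuousLinearMap.opNorm_le_bound _ hM0
  intro x
  rw [show ((Matrix.toEuclideanLin (Jrinv φ)).toContinuousLinearMap x)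
      = Matrix.toEuclideanLin (Jrinv φ) x from
    congrFun (LinearMap.coe_toContinuousLinearMap' _) x]
  have hnx : ‖x‖^2 = x 0^2 + x 1^2 + x 2^2 := normsq3 x
  have hy0 : (Matrix.toEuclideanLin (Jrinv φ) x) 0 =
      x 0 + (1/2) * (φ 1 * x 2 - φ 2 * x 1)
        + c * (φ 0 * (φ 0 * x 0 + φ 1 * x 1 + φ 2 * x 2) - (φ 0^2 + φ 1^2 + φ 2^2) * x 0) :=
    mulVec_form0 φ x c
  have hy1 : (Matrix.toEuclideanLin (Jrinv φ) x) 1 =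
      x 1 + (1/2) * (φ 2 * x 0 - φ 0 * x 2)
        + c * (φ 1 * (φ 0 * x 0 + φ 1 * x 1 + φ 2 * x 2) - (φ 0^2 + φ 1^2 + φ 2^2) * x 1) :=
    mulVec_form1 φ x c
  have hy2 : (Matrix.toEuclideanLin (Jrinv φ) x) 2 =
      x 2 + (1/2) * (φ 0 * x 1 - φ 1 * x 0)
        + c * (φ 2 * (φ 0 * x 0 + φ 1 * x 1 + φ 2 * x 2) - (φ 0^2 + φ 1^2 + φ 2^2) * x 2) :=
    mulVec_form2 φ x c
  set d : ℝ := φ 0 * x 0 + φ 1 * x 1 + φ 2 * x 2 with hd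
  have hY : ‖Matrix.toEuclideanLin (Jrinv φ) x‖^2 =
      (1-c*t^2)^2*‖x‖^2 + (2*c - c^2*t^2)*d^2 + (t^2*‖x‖^2 - d^2)/4 := by
    rw [normsq3, hy0, hy1, hy2, hnx, ht2, hd]
    ring
  have hdle : d^2 ≤ t^2 * ‖x‖^2 := by
    rw [hd, ht2, hnx]
    exact cauchy3 _ _ _ _ _ _
  have hts : 0 < t^2 := by positivity
  have hfinal := key_alg c (t^2) (‖x‖^2) d _ M hts hM1 hM2 hdle hY
  refine sq_le_step _ _ (norm_nonneg _) (mul_nonneg hM0 (norm_nonneg x)) ?_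
  calc ‖Matrix.toEuclideanLin (Jrinv φ) x‖^2 ≤ M^2 * ‖x‖^2 := hfinal
    _ = (M * ‖x‖)^2 := by ring
end
end

section
/- Let φ ∈ ℝ³ with φ ≠ 0 and θ = ‖φ‖, and define the SO(3) left Jacobian J_ℓ(φ) = I + ((1 − cos θ)/θ²)[φ]× + ((θ − sin θ)/θ³)([φ]×)². Then the operator norm of J_ℓ(φ), as a linear map on Euclidean ℝ³, equals 1; in particular ‖J_ℓ(φ) u‖ ≤ ‖u‖ for every u ∈ ℝ³. -/
noncomputable section
open Matrix

lemma keyid (p0 p1 p2 u0 u1 u2 t c sn : ℝ)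
    (hQ : p0^2+p1^2+p2^2 = t^2) (hsc : sn^2 + c^2 = 1) :
    (t^3*u0 + t*(1-c)*(p1*u2 - p2*u1) + (t-sn)*(p0*(p0*u0+p1*u1+p2*u2) - (p0^2+p1^2+p2^2)*u0))^2
  + (t^3*u1 + t*(1-c)*(p2*u0 - p0*u2) + (t-sn)*(p1*(p0*u0+p1*u1+p2*u2) - (p0^2+p1^2+p2^2)*u1))^2
  + (t^3*u2 + t*(1-c)*(p0*u1 - p1*u0) + (t-sn)*(p2*(p0*u0+p1*u1+p2*u2) - (p0^2+p1^2+p2^2)*u2))^2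
  = (2-2*c)*t^4*(u0^2+u1^2+u2^2) + (t^2-2+2*c)*t^2*(p0*u0+p1*u1+p2*u2)^2 := by
  linear_combination
    ((t-sn)^2*(u0^2+u1^2+u2^2)*((p0^2+p1^2+p2^2)+t^2)
      - 2*t^3*(t-sn)*(u0^2+u1^2+u2^2) - (t-sn)^2*(p0*u0+p1*u1+p2*u2)^2
      + t^2*(1-c)^2*(u0^2+u1^2+u2^2)) * hQ
    + (t^4*(u0^2+u1^2+u2^2) - t^2*(p0*u0+p1*u1+p2*u2)^2) * hsc

set_option maxHeartbeats 1600000 in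
lemma Jl_contract (φ : V3) (hφ : φ ≠ 0) (u : V3) :
    ‖Matrix.toEuclideanLin (Jl φ) u‖ ≤ ‖u‖ := by
  have ht : (0:ℝ) < ‖φ‖ := norm_pos_iff.mpr hφ
  set t := ‖φ‖ with htdef
  have hQ : φ 0 ^ 2 + φ 1 ^ 2 + φ 2 ^ 2 = t ^ 2 := by
    have h := EuclideanSpace.norm_eq φ
    rw [htdef, h, Real.sq_sqrt (by positivity)]
    simp [Fin.sum_univ_three, Real.norm_eq_abs, sq_abs]
  have hsc : Real.sin t ^ 2 + Real.cos t ^ 2 = 1 := Real.sin_sq_add_cos_sq t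
  have hcos : 1 - t ^ 2 / 2 ≤ Real.cos t := Real.one_sub_sq_div_two_le_cos
  have hc1 : Real.cos t ≤ 1 := Real.cos_le_one t
  have tne : t ≠ 0 := ne_of_gt ht
  set c := Real.cos t
  set sn := Real.sin t
  set p0 := φ 0; set p1 := φ 1; set p2 := φ 2
  set P0 := t^3*(u 0) + t*(1-c)*(p1*(u 2) - p2*(u 1))
      + (t-sn)*(p0*(p0*(u 0)+p1*(u 1)+p2*(u 2)) - (p0^2+p1^2+p2^2)*(u 0)) with hP0
  set P1 := t^3*(u 1) + t*(1-c)*(p2*(u 0) - p0*(u 2))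
      + (t-sn)*(p1*(p0*(u 0)+p1*(u 1)+p2*(u 2)) - (p0^2+p1^2+p2^2)*(u 1)) with hP1
  set P2 := t^3*(u 2) + t*(1-c)*(p0*(u 1) - p1*(u 0))
      + (t-sn)*(p2*(p0*(u 0)+p1*(u 1)+p2*(u 2)) - (p0^2+p1^2+p2^2)*(u 2)) with hP2
  have h0 : (Jl φ *ᵥ u) 0 = P0 / t^3 := by
    rw [hP0]; simp [Jl, skew, Matrix.mulVec, dotProduct, Fin.sum_univ_three, pow_two,
      Matrix.mul_apply, Matrix.one_apply]
    field_simp; ring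
  have h1 : (Jl φ *ᵥ u) 1 = P1 / t^3 := by
    rw [hP1]; simp [Jl, skew, Matrix.mulVec, dotProduct, Fin.sum_univ_three, pow_two,
      Matrix.mul_apply, Matrix.one_apply]
    field_simp; ring
  have h2 : (Jl φ *ᵥ u) 2 = P2 / t^3 := by
    rw [hP2]; simp [Jl, skew, Matrix.mulVec, dotProduct, Fin.sum_univ_three, pow_two,
      Matrix.mul_apply, Matrix.one_apply]
    field_simp; ring
  have key := keyid p0 p1 p2 (u 0) (u 1) (u 2) t c sn hQ hsc
  rw [← hP0, ← hP1, ← hP2] at key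
  -- Cauchy-Schwarz
  have hCS : (p0*(u 0)+p1*(u 1)+p2*(u 2))^2 ≤ t^2 * ((u 0)^2+(u 1)^2+(u 2)^2) := by
    nlinarith [sq_nonneg (p0*(u 1) - p1*(u 0)), sq_nonneg (p0*(u 2) - p2*(u 0)),
      sq_nonneg (p1*(u 2) - p2*(u 1))]
  have hpos : 0 ≤ t^2 - 2 + 2*c := by nlinarith
  have hsum : P0^2 + P1^2 + P2^2 ≤ t^6 * ((u 0)^2+(u 1)^2+(u 2)^2) := by
    nlinarith [key, mul_nonneg (mul_nonneg hpos (sq_nonneg t)) (sub_nonneg.mpr hCS)]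
  rw [EuclideanSpace.norm_eq, EuclideanSpace.norm_eq]
  apply Real.sqrt_le_sqrt
  have hvi : ∀ i, Matrix.toEuclideanLin (Jl φ) u i = (Jl φ *ᵥ u) i := fun _ => rfl
  simp only [Fin.sum_univ_three, Real.norm_eq_abs, sq_abs, hvi, h0, h1, h2]
  have h6 : (P0/t^3)^2 + (P1/t^3)^2 + (P2/t^3)^2 = (P0^2+P1^2+P2^2)/t^6 := by
    rw [div_pow, div_pow, div_pow, ← pow_mul, ← add_div, ← add_div]
  rw [h6, div_le_iff₀ (by positivity)]
  linarith [hsum]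

set_option maxHeartbeats 1000000 in
lemma Jl_fix (φ : V3) (hφ : φ ≠ 0) :
    Matrix.toEuclideanLin (Jl φ) φ = φ := by
  have ht : (0:ℝ) < ‖φ‖ := norm_pos_iff.mpr hφ
  have tne : ‖φ‖ ≠ 0 := ne_of_gt ht
  ext i
  have hvi : Matrix.toEuclideanLin (Jl φ) φ i = (Jl φ *ᵥ φ) i := rfl
  rw [hvi]
  fin_cases i <;>
  · simp [Jl, skew, Matrix.mulVec, dotProduct, Fin.sum_univ_three, pow_two,
      Matrix.mul_apply, Matrix.one_apply]
    field_simp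
    ring

/-- the operator norm of the SO(3) left Jacobian equals 1;
in particular `‖J_ℓ(φ) u‖ ≤ ‖u‖` for all `u`. -/
theorem Jl_opNorm_eq_one (φ : V3) (hφ : φ ≠ 0) :
    ‖(Matrix.toEuclideanLin (Jl φ)).toContinuousLinearMap‖ = 1 ∧
    ∀ u : V3, ‖Matrix.toEuclideanLin (Jl φ) u‖ ≤ ‖u‖ := by
  have hle : ∀ u : V3, ‖Matrix.toEuclideanLin (Jl φ) u‖ ≤ ‖u‖ := Jl_contract φ hφ
  refine ⟨le_antisymm ?_ ?_, hle⟩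
  · apply ContinuousLinearMap.opNorm_le_bound _ zero_le_one
    intro u
    rw [one_mul]
    exact hle u
  · have ht : (0:ℝ) < ‖φ‖ := norm_pos_iff.mpr hφ
    have h := (Matrix.toEuclideanLin (Jl φ)).toContinuousLinearMap.le_opNorm φ
    rw [show ((Matrix.toEuclideanLin (Jl φ)).toContinuousLinearMap) φ
        = Matrix.toEuclideanLin (Jl φ) φ from rfl, Jl_fix φ hφ] at h
    nlinarith [h, ht]
end
end

section
/- Let ā, ω̄ ∈ ℝ³ and set n̄ = (0, ā, ω̄) ∈ ℝ³×ℝ³×ℝ³. Then for every ξ = (ξ_p, ξ_v, ξ_R) ∈ ℝ³×ℝ³×ℝ³, the vector (−ad_{n̄∧}(ξ∧))∨ + A_C ξ has components (−ω̄ × ξ_p + ξ_v, −ω̄ × ξ_v − ā × ξ_R, −ω̄ × ξ_R); that is, the log-linearized error dynamics matrix −ad_{n̄} + A_C acts componentwise as ξ̇_p = −[ω̄]×ξ_p + ξ_v, ξ̇_v = −[ω̄]×ξ_v − [ā]×ξ_R, ξ̇_R = −[ω̄]×ξ_R. -/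
noncomputable section
open Matrix

set_option maxHeartbeats 4000000 in
private lemma aux_lld (abar ωbar : V3) (ξp ξv ξR : V3) :
    -(wedge 0 abar ωbar * wedge ξp ξv ξR - wedge ξp ξv ξR * wedge 0 abar ωbar)
        + wedge ξv 0 0
      = wedge (-(cross3 ωbar ξp) + ξv)
          (-(cross3 ωbar ξv) - cross3 abar ξR)
          (-(cross3 ωbar ξR)) := by
  ext i j
  fin_cases i <;> fin_cases j <;>
    simp [wedge, cross3, Matrix.mul_apply, Fin.sum_univ_five,
      PiLp.add_apply, PiLp.neg_apply, PiLp.sub_apply, PiLp.zero_apply,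
      Matrix.vecHead, Matrix.vecTail] <;> ring

/-- the log-linearized error dynamics matrix `−ad_{n̄} + A_C`
acts componentwise as `ξ̇_p = −[ω̄]×ξ_p + ξ_v`, `ξ̇_v = −[ω̄]×ξ_v − [ā]×ξ_R`,
`ξ̇_R = −[ω̄]×ξ_R`, where `n̄ = (0, ā, ω̄)`. -/
theorem log_linear_dynamics_structure (abar ωbar : V3) (ξp ξv ξR : V3) :
    -(wedge 0 abar ωbar * wedge ξp ξv ξR - wedge ξp ξv ξR * wedge 0 abar ωbar)
        + wedge ξv 0 0
      = wedge (-(cross3 ωbar ξp) + ξv)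
          (-(cross3 ωbar ξv) - cross3 abar ξR)
          (-(cross3 ωbar ξR)) :=
  aux_lld abar ωbar ξp ξv ξR
end
end

section
/- Let μ > 0, let p, p̄ ∈ ℝ³ with p̄ ≠ 0 and r = ‖p̄‖, let R̄ be an orthogonal 3×3 real matrix (R̄ᵀR̄ = I), and let ξ_R, ξ_p ∈ ℝ³ with θ = ‖ξ_R‖ satisfying 0 < θ < π. Define J_r⁻¹(ξ_R) = I + (1/2)[ξ_R]× + (1/θ² − (1 + cos θ)/(2θ sin θ))([ξ_R]×)². Assume ‖p̄ − p‖ ≤ ‖ξ_p‖ and ‖ξ_p‖ < r. Then ‖J_r⁻¹(ξ_R) · (R̄ᵀ (g(p̄) − g(p)))‖ ≤ ((θ/2)/sin(θ/2)) · μ ‖ξ_p‖ (2r − ‖ξ_p‖) / (r² (r − ‖ξ_p‖)²). -/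
noncomputable section
open Matrix

private lemma v3_norm_sq (x : V3) : ‖x‖ ^ 2 = x 0 ^ 2 + x 1 ^ 2 + x 2 ^ 2 := by
  rw [EuclideanSpace.norm_eq, Real.sq_sqrt (by positivity)]
  simp [Fin.sum_univ_three, sq_abs]

private lemma toEL_apply (M : Matrix (Fin 3) (Fin 3) ℝ) (v : V3) (i : Fin 3) :
    Matrix.toEuclideanLin M v i = M i 0 * v 0 + M i 1 * v 1 + M i 2 * v 2 := by
  simp [Matrix.toEuclideanLin_apply, Matrix.mulVec, dotProduct, Fin.sum_univ_three]

private lemma Japp0 (c : ℝ) (φ u : V3) :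
    Matrix.toEuclideanLin (1 + (1/2:ℝ) • skew φ + c • (skew φ ^ 2)) u 0
      = u 0 + (1/2) * (φ 1 * u 2 - φ 2 * u 1)
        + c * ((φ 0 * u 0 + φ 1 * u 1 + φ 2 * u 2) * φ 0
               - (φ 0 ^ 2 + φ 1 ^ 2 + φ 2 ^ 2) * u 0) := by
  rw [toEL_apply]
  simp [skew, pow_two, Matrix.mul_apply, Fin.sum_univ_three, Matrix.one_apply]
  ring

private lemma Japp1 (c : ℝ) (φ u : V3) :
    Matrix.toEuclideanLin (1 + (1/2:ℝ) • skew φ + c • (skew φ ^ 2)) u 1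
      = u 1 + (1/2) * (φ 2 * u 0 - φ 0 * u 2)
        + c * ((φ 0 * u 0 + φ 1 * u 1 + φ 2 * u 2) * φ 1
               - (φ 0 ^ 2 + φ 1 ^ 2 + φ 2 ^ 2) * u 1) := by
  rw [toEL_apply]
  simp [skew, pow_two, Matrix.mul_apply, Fin.sum_univ_three, Matrix.one_apply]
  ring

private lemma Japp2 (c : ℝ) (φ u : V3) :
    Matrix.toEuclideanLin (1 + (1/2:ℝ) • skew φ + c • (skew φ ^ 2)) u 2
      = u 2 + (1/2) * (φ 0 * u 1 - φ 1 * u 0)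
        + c * ((φ 0 * u 0 + φ 1 * u 1 + φ 2 * u 2) * φ 2
               - (φ 0 ^ 2 + φ 1 ^ 2 + φ 2 ^ 2) * u 2) := by
  rw [toEL_apply]
  simp [skew, pow_two, Matrix.mul_apply, Fin.sum_univ_three, Matrix.one_apply]
  ring

private lemma Jrinv_bound (φ u : V3) (h0 : 0 < ‖φ‖) (hπ : ‖φ‖ < Real.pi) :
    ‖Matrix.toEuclideanLin (Jrinv φ) u‖
      ≤ ((‖φ‖ / 2) / Real.sin (‖φ‖ / 2)) * ‖u‖ := by
  set θ := ‖φ‖ with hθ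
  set c : ℝ := (θ ^ 2)⁻¹ - (1 + Real.cos θ) / (2 * θ * Real.sin θ) with hc
  set K : ℝ := (θ / 2) / Real.sin (θ / 2) with hK
  have hsh : 0 < Real.sin (θ/2) :=
    Real.sin_pos_of_pos_of_lt_pi (by linarith) (by linarith [Real.pi_pos])
  have hch : 0 < Real.cos (θ/2) :=
    Real.cos_pos_of_mem_Ioo ⟨by linarith [Real.pi_pos], by linarith⟩
  have hsin : Real.sin θ = 2 * Real.sin (θ/2) * Real.cos (θ/2) := by
    rw [← Real.sin_two_mul]; ring_nf
  have hcos : Real.cos θ = 2 * Real.cos (θ/2)^2 - 1 := by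
    rw [← Real.cos_two_mul]; ring_nf
  have hpyth : Real.sin (θ/2)^2 + Real.cos (θ/2)^2 = 1 := Real.sin_sq_add_cos_sq _
  have hK1 : (1:ℝ) ≤ K := by
    rw [hK, le_div_iff₀ hsh]
    simpa using (Real.sin_lt (by linarith : 0 < θ/2)).le
  have hKpos : 0 < K := lt_of_lt_of_le one_pos hK1
  have hα : 1 - c * θ^2 = (θ/2) * Real.cos (θ/2) / Real.sin (θ/2) := by
    rw [hc, hcos, hsin]
    field_simp
    ring
  have hK2 : (1 - c * θ^2)^2 + θ^2/4 = K^2 := by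
    rw [hα, hK]
    field_simp
    linear_combination 4 * hpyth
  have hcoef : 2*c - c^2*θ^2 - 1/4 ≤ 0 := by
    have h5 : θ^2 * (2*c - c^2*θ^2 - 1/4) = 1 - K^2 := by linear_combination -hK2
    have hθ2 : 0 < θ^2 := by positivity
    nlinarith [h5, hθ2, hK1, sq_nonneg (K-1)]
  have hS : φ 0 ^ 2 + φ 1 ^ 2 + φ 2 ^ 2 = θ^2 := (v3_norm_sq φ).symm
  have hJ : Jrinv φ = 1 + (1/2:ℝ) • skew φ + c • (skew φ ^ 2) := rfl
  clear_value c K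
  have h0' := Japp0 c φ u
  have h1' := Japp1 c φ u
  have h2' := Japp2 c φ u
  rw [← hJ] at h0' h1' h2'
  have hident : (Matrix.toEuclideanLin (Jrinv φ) u) 0 ^ 2
        + (Matrix.toEuclideanLin (Jrinv φ) u) 1 ^ 2
        + (Matrix.toEuclideanLin (Jrinv φ) u) 2 ^ 2
      = ((1 - c*θ^2)^2 + θ^2/4) * (u 0^2 + u 1^2 + u 2^2)
        + (2*c - c^2*θ^2 - 1/4) * (φ 0*u 0 + φ 1*u 1 + φ 2*u 2)^2 := by
    rw [h0', h1', h2', ← hS]; ring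
  have hsq : ‖Matrix.toEuclideanLin (Jrinv φ) u‖^2 ≤ (K * ‖u‖)^2 := by
    rw [v3_norm_sq (Matrix.toEuclideanLin (Jrinv φ) u), mul_pow, ← hK2,
      v3_norm_sq u, hident]
    have hT2 : (2*c - c^2*θ^2 - 1/4) * (φ 0*u 0 + φ 1*u 1 + φ 2*u 2)^2 ≤ 0 := by
      have h6 := mul_le_mul_of_nonneg_right hcoef
        (sq_nonneg (φ 0*u 0 + φ 1*u 1 + φ 2*u 2))
      simpa using h6
    linarith
  have := Real.sqrt_le_sqrt hsq
  rwa [Real.sqrt_sq (norm_nonneg _), Real.sqrt_sq (by positivity)] at this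

private lemma orth_norm (R : Matrix (Fin 3) (Fin 3) ℝ) (hR : Rᵀ * R = 1) (w : V3) :
    ‖Matrix.toEuclideanLin Rᵀ w‖ = ‖w‖ := by
  have hR' : R * Rᵀ = 1 := mul_eq_one_comm.mp hR
  have e : ∀ i j : Fin 3, (R * Rᵀ) i j = (1 : Matrix (Fin 3) (Fin 3) ℝ) i j := by
    rw [hR']; intro i j; rfl
  have h00 := e 0 0; have h01 := e 0 1; have h02 := e 0 2
  have h11 := e 1 1; have h12 := e 1 2; have h22 := e 2 2
  simp [Matrix.mul_apply, Fin.sum_univ_three, Matrix.one_apply] at h00 h01 h02 h11 h12 h22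
  have hsq : ‖Matrix.toEuclideanLin Rᵀ w‖ ^ 2 = ‖w‖ ^ 2 := by
    rw [v3_norm_sq, v3_norm_sq, toEL_apply, toEL_apply, toEL_apply]
    simp only [Matrix.transpose_apply]
    linear_combination (w 0^2) * h00 + (w 1^2) * h11 + (w 2^2) * h22
      + (2*w 0*w 1) * h01 + (2*w 0*w 2) * h02 + (2*w 1*w 2) * h12
  have := congrArg Real.sqrt hsq
  rwa [Real.sqrt_sq (norm_nonneg _), Real.sqrt_sq (norm_nonneg _)] at this

private lemma grav_diff_bound (μ : ℝ) (hμ : 0 < μ) (x y : V3) (hx : 0 < ‖x‖) (hy : 0 < ‖y‖) :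
    ‖grav μ x - grav μ y‖ ≤ μ * ‖x - y‖ * (‖x‖ + ‖y‖) / (‖x‖ ^ 2 * ‖y‖ ^ 2) := by
  set r := ‖x‖
  set s := ‖y‖
  set t := (inner ℝ x y : ℝ) with ht
  have hts : t ≤ r * s := real_inner_le_norm x y
  have hxy : ‖x - y‖ ^ 2 = r ^ 2 - 2 * t + s ^ 2 := by
    rw [@norm_sub_sq_real]
  have hnsq : ‖grav μ x - grav μ y‖ ^ 2
      = μ ^ 2 * (s ^ 4 + r ^ 4 - 2 * t * r * s) / (r ^ 4 * s ^ 4) := by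
    rw [grav, grav, @norm_sub_sq_real]
    rw [norm_smul, norm_smul, real_inner_smul_left, real_inner_smul_right]
    rw [Real.norm_eq_abs, Real.norm_eq_abs, abs_neg, abs_neg,
      abs_of_nonneg (by positivity : (0:ℝ) ≤ μ / r ^ 3),
      abs_of_nonneg (by positivity : (0:ℝ) ≤ μ / s ^ 3)]
    rw [← ht]
    rw [show ‖x‖ = r from rfl, show ‖y‖ = s from rfl]
    field_simp
    ring
  have hnum : μ ^ 2 * (s ^ 4 + r ^ 4 - 2 * t * r * s)
      ≤ μ ^ 2 * ((r ^ 2 - 2 * t + s ^ 2) * (r + s) ^ 2) := by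
    nlinarith [mul_nonneg (mul_nonneg (sq_nonneg μ) (sub_nonneg.2 hts))
      (by positivity : (0:ℝ) ≤ r ^ 2 + r * s + s ^ 2)]
  have hBsq : (μ * ‖x - y‖ * (r + s) / (r ^ 2 * s ^ 2)) ^ 2
      = μ ^ 2 * ((r ^ 2 - 2 * t + s ^ 2) * (r + s) ^ 2) / (r ^ 4 * s ^ 4) := by
    rw [div_pow, mul_pow, mul_pow, hxy]
    ring
  have hsq : ‖grav μ x - grav μ y‖ ^ 2
      ≤ (μ * ‖x - y‖ * (r + s) / (r ^ 2 * s ^ 2)) ^ 2 := by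
    rw [hnsq, hBsq]
    gcongr
  have := Real.sqrt_le_sqrt hsq
  rwa [Real.sqrt_sq (norm_nonneg _), Real.sqrt_sq (by positivity)] at this

private lemma grav_mono (μ r s δ d : ℝ) (hμ : 0 < μ) (hδ : 0 ≤ δ) (hδd : δ ≤ d)
    (hd : d < r) (hs : r - δ ≤ s) :
    μ * δ * (r + s) / (r ^ 2 * s ^ 2) ≤ μ * d * (2 * r - d) / (r ^ 2 * (r - d) ^ 2) := by
  have hr : 0 < r := by linarith
  have ha : 0 < r - d := by linarith
  have hs0 : 0 < s := by linarith
  have key : δ * (r + s) * (r - d) ^ 2 ≤ d * (2 * r - d) * s ^ 2 := by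
    nlinarith [mul_nonneg (mul_nonneg (by linarith : (0:ℝ) ≤ d) (by linarith : (0:ℝ) ≤ s - (r - d)))
        (by nlinarith : (0:ℝ) ≤ (r - d) * (3 * r - d) + (2 * r - d) * (s - (r - d))),
      mul_nonneg (by linarith : (0:ℝ) ≤ d - δ)
        (by positivity : (0:ℝ) ≤ (r + s) * (r - d) ^ 2)]
  rw [div_le_div_iff₀ (by positivity) (by positivity)]
  nlinarith [mul_le_mul_of_nonneg_left key (by positivity : (0:ℝ) ≤ μ * r ^ 2)]

/-- the gravity-mismatch bound
`‖J_r⁻¹(ξ_R) R̄ᵀ(g(p̄) − g(p))‖ ≤ (θ/2)/sin(θ/2) · μ‖ξ_p‖(2r − ‖ξ_p‖)/(r²(r − ‖ξ_p‖)²)`. -/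
theorem gravity_mismatch_bound (μ : ℝ) (hμ : 0 < μ) (p pb : V3) (hpb : pb ≠ 0)
    (Rb : Matrix (Fin 3) (Fin 3) ℝ) (hRb : Rbᵀ * Rb = 1)
    (ξR ξp : V3) (hθ0 : 0 < ‖ξR‖) (hθπ : ‖ξR‖ < Real.pi)
    (hdle : ‖pb - p‖ ≤ ‖ξp‖) (hlt : ‖ξp‖ < ‖pb‖) :
    ‖Matrix.toEuclideanLin (Jrinv ξR)
        (Matrix.toEuclideanLin Rbᵀ (grav μ pb - grav μ p))‖
      ≤ ((‖ξR‖ / 2) / Real.sin (‖ξR‖ / 2))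
          * (μ * ‖ξp‖ * (2 * ‖pb‖ - ‖ξp‖)
              / (‖pb‖ ^ 2 * (‖pb‖ - ‖ξp‖) ^ 2)) := by
  have hr : 0 < ‖pb‖ := norm_pos_iff.mpr hpb
  have hδ0 : (0:ℝ) ≤ ‖pb - p‖ := norm_nonneg _
  have hnn := norm_sub_norm_le pb p
  have hp0 : 0 < ‖p‖ := by linarith
  have hsh : 0 < Real.sin (‖ξR‖ / 2) :=
    Real.sin_pos_of_pos_of_lt_pi (by linarith) (by linarith [Real.pi_pos])
  have hK0 : 0 ≤ (‖ξR‖ / 2) / Real.sin (‖ξR‖ / 2) := by positivity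
  have h1 := Jrinv_bound ξR (Matrix.toEuclideanLin Rbᵀ (grav μ pb - grav μ p)) hθ0 hθπ
  rw [orth_norm Rb hRb (grav μ pb - grav μ p)] at h1
  have h2 := grav_diff_bound μ hμ pb p hr hp0
  have h3 := grav_mono μ ‖pb‖ ‖p‖ ‖pb - p‖ ‖ξp‖ hμ hδ0 hdle hlt (by linarith)
  calc ‖Matrix.toEuclideanLin (Jrinv ξR)
        (Matrix.toEuclideanLin Rbᵀ (grav μ pb - grav μ p))‖
      ≤ ((‖ξR‖ / 2) / Real.sin (‖ξR‖ / 2)) * ‖grav μ pb - grav μ p‖ := h1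
    _ ≤ ((‖ξR‖ / 2) / Real.sin (‖ξR‖ / 2))
          * (μ * ‖ξp‖ * (2 * ‖pb‖ - ‖ξp‖) / (‖pb‖ ^ 2 * (‖pb‖ - ‖ξp‖) ^ 2)) :=
        mul_le_mul_of_nonneg_left (h2.trans h3) hK0
end
end

section
/- Let X be the SE₂(3)-embedding of (R, v, p) and X̄ the SE₂(3)-embedding of (R̄, v̄, p̄), with R an orthogonal 3×3 real matrix (RᵀR = I). Let ξ = (ξ_p, ξ_v, ξ_R) ∈ ℝ³×ℝ³×ℝ³ with ξ_R ≠ 0 and θ = ‖ξ_R‖, and suppose X⁻¹X̄ = exp(ξ∧). Then p̄ − p = R·(J_ℓ(ξ_R) ξ_p), where J_ℓ(ξ_R) = I + ((1 − cos θ)/θ²)[ξ_R]× + ((θ − sin θ)/θ³)([ξ_R]×)², and consequently ‖p̄ − p‖ ≤ ‖ξ_p‖ in the Euclidean norm. -/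
noncomputable section
open Matrix

/-! ### Auxiliary material -/

open scoped Nat

namespace PosErrAux

/-- Embedding of a 3×3 block together with two column vectors into a 5×5 matrix with zero
last two rows. -/
def emb (M : Matrix (Fin 3) (Fin 3) ℝ) (a b : Fin 3 → ℝ) : Matrix (Fin 5) (Fin 5) ℝ :=
  !![M 0 0, M 0 1, M 0 2, a 0, b 0;
     M 1 0, M 1 1, M 1 2, a 1, b 1;
     M 2 0, M 2 1, M 2 2, a 2, b 2;
     0, 0, 0, 0, 0;
     0, 0, 0, 0, 0]

lemma wedge_eq_emb (ξp ξv ξR : V3) :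
    wedge ξp ξv ξR = emb (skew ξR) (fun i => ξv i) (fun i => ξp i) := by
  ext i j
  fin_cases i <;> fin_cases j <;> simp [wedge, emb, skew]

set_option maxHeartbeats 2000000 in
lemma emb_mul_wedge (M : Matrix (Fin 3) (Fin 3) ℝ) (a b : Fin 3 → ℝ) (ξp ξv ξR : V3) :
    emb M a b * wedge ξp ξv ξR
      = emb (M * skew ξR) (M *ᵥ fun i => ξv i) (M *ᵥ fun i => ξp i) := by
  ext i j
  rw [Matrix.mul_apply, Fin.sum_univ_five]
  fin_cases i <;> fin_cases j <;>
    simp [emb, wedge, skew, Matrix.mul_apply, Fin.sum_univ_three,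
      Matrix.mulVec, dotProduct, Matrix.vecHead, Matrix.vecTail] <;> ring_nf

lemma wedge_pow_succ (ξp ξv ξR : V3) (n : ℕ) :
    wedge ξp ξv ξR ^ (n + 1)
      = emb (skew ξR ^ (n + 1)) (skew ξR ^ n *ᵥ fun i => ξv i)
          (skew ξR ^ n *ᵥ fun i => ξp i) := by
  induction n with
  | zero =>
      simp only [zero_add, pow_one, pow_zero, Matrix.one_mulVec]
      exact wedge_eq_emb ξp ξv ξR
  | succ n ih =>
      rw [pow_succ, ih, emb_mul_wedge, ← pow_succ]

lemma hasSum_exp5 (A : Matrix (Fin 5) (Fin 5) ℝ) :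
    HasSum (fun n : ℕ => ((n : ℕ)! : ℝ)⁻¹ • A ^ n) (NormedSpace.exp A) := by
  letI : SeminormedRing (Matrix (Fin 5) (Fin 5) ℝ) := Matrix.linftyOpSemiNormedRing
  letI : NormedRing (Matrix (Fin 5) (Fin 5) ℝ) := Matrix.linftyOpNormedRing
  letI : NormedAlgebra ℝ (Matrix (Fin 5) (Fin 5) ℝ) := Matrix.linftyOpNormedAlgebra
  exact NormedSpace.exp_series_hasSum_exp' A

lemma norm_sq_V3 (y : V3) : ‖y‖ ^ 2 = y 0 ^ 2 + y 1 ^ 2 + y 2 ^ 2 := by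
  rw [EuclideanSpace.norm_eq, Real.sq_sqrt (by positivity)]
  simp [Fin.sum_univ_three, Real.norm_eq_abs, sq_abs]

lemma skew_cube (u : V3) : skew u ^ 3 = (-‖u‖ ^ 2) • skew u := by
  rw [norm_sq_V3]
  ext i j
  fin_cases i <;> fin_cases j <;>
    simp [skew, pow_succ, Matrix.mul_apply, Fin.sum_univ_three] <;> ring

lemma skew_pow_odd (u : V3) (k : ℕ) :
    skew u ^ (2 * k + 1) = ((-‖u‖ ^ 2 : ℝ) ^ k) • skew u := by
  induction k with
  | zero => simp
  | succ k ih =>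
      have h : 2 * (k + 1) + 1 = (2 * k + 1) + 2 := by ring
      have h3 : skew u * skew u ^ 2 = (-‖u‖ ^ 2) • skew u := by
        rw [← pow_succ']; exact skew_cube u
      rw [h, pow_add, ih, Matrix.smul_mul, h3, smul_smul, ← pow_succ]

lemma skew_pow_even (u : V3) (k : ℕ) :
    skew u ^ (2 * k + 2) = ((-‖u‖ ^ 2 : ℝ) ^ k) • skew u ^ 2 := by
  have : skew u ^ (2 * k + 2) = skew u ^ (2 * k + 1) * skew u := by rw [← pow_succ]
  rw [this, skew_pow_odd, Matrix.smul_mul, ← pow_two]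

lemma hasSum_cos_aux {x : ℝ} (hx : x ≠ 0) :
    HasSum (fun k : ℕ => ((-1 : ℝ)) ^ k * x ^ (2 * k) / (2 * k + 2)!)
      ((1 - Real.cos x) / x ^ 2) := by
  have hcos := Real.hasSum_cos x
  have h1 := (hasSum_nat_add_iff'
      (f := fun n : ℕ => ((-1 : ℝ)) ^ n * x ^ (2 * n) / (2 * n)!) 1).mpr hcos
  have h2 := (h1.neg).div_const (x ^ 2)
  convert h2 using 1
  · rfl
  · funext n
    have he : 2 * (n + 1) = 2 * n + 2 := by ring
    rw [he]
    have : x ^ (2 * n + 2) = x ^ (2 * n) * x ^ 2 := by ring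
    field_simp
    ring
  · simp

lemma hasSum_sin_aux {x : ℝ} (hx : x ≠ 0) :
    HasSum (fun k : ℕ => ((-1 : ℝ)) ^ k * x ^ (2 * k) / (2 * k + 3)!)
      ((x - Real.sin x) / x ^ 3) := by
  have hsin := Real.hasSum_sin x
  have h1 := (hasSum_nat_add_iff'
      (f := fun n : ℕ => ((-1 : ℝ)) ^ n * x ^ (2 * n + 1) / (2 * n + 1)!) 1).mpr hsin
  have h2 := (h1.neg).div_const (x ^ 3)
  convert h2 using 1
  · rfl
  · funext n
    have he : 2 * (n + 1) + 1 = 2 * n + 3 := by ring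
    rw [he]
    have : x ^ (2 * n + 3) = x ^ (2 * n) * x ^ 3 := by ring
    field_simp
    ring
  · simp


set_option maxHeartbeats 1000000 in
lemma hasSum_Jl (u : V3) (hu : u ≠ 0) :
    HasSum (fun m : ℕ => (((m + 1) : ℕ)! : ℝ)⁻¹ • skew u ^ m) (Jl u) := by
  have hθ : 0 < ‖u‖ := norm_pos_iff.mpr hu
  have hθ0 : ‖u‖ ≠ 0 := hθ.ne'
  have hodd : HasSum (fun k : ℕ => (((2 * k + 1 + 1) : ℕ)! : ℝ)⁻¹ • skew u ^ (2 * k + 1))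
      (((1 - Real.cos ‖u‖) / ‖u‖ ^ 2) • skew u) := by
    have h := (hasSum_cos_aux hθ0).smul_const (skew u)
    convert h using 1
    funext k
    rw [skew_pow_odd, smul_smul]
    congr 1
    rw [show ((-‖u‖ ^ 2 : ℝ)) ^ k = (-1 : ℝ) ^ k * ‖u‖ ^ (2 * k) by
      rw [neg_pow, pow_mul]]
    field_simp
  have heven : HasSum (fun k : ℕ => (((2 * k + 1) : ℕ)! : ℝ)⁻¹ • skew u ^ (2 * k))
      (1 + ((‖u‖ - Real.sin ‖u‖) / ‖u‖ ^ 3) • skew u ^ 2) := by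
    refine (hasSum_nat_add_iff'
      (f := fun k : ℕ => (((2 * k + 1) : ℕ)! : ℝ)⁻¹ • skew u ^ (2 * k)) 1).mp ?_
    have h := (hasSum_sin_aux hθ0).smul_const (skew u ^ 2)
    have hsum : (1 : Matrix (Fin 3) (Fin 3) ℝ) + ((‖u‖ - Real.sin ‖u‖) / ‖u‖ ^ 3) • skew u ^ 2
        - ∑ i ∈ Finset.range 1, (((2 * i + 1) : ℕ)! : ℝ)⁻¹ • skew u ^ (2 * i)
        = ((‖u‖ - Real.sin ‖u‖) / ‖u‖ ^ 3) • skew u ^ 2 := by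
      simp
    rw [hsum]
    convert h using 1
    · rfl
    funext k
    have he : 2 * (k + 1) = 2 * k + 2 := by ring
    rw [he, skew_pow_even, smul_smul]
    congr 1
    rw [show ((-‖u‖ ^ 2 : ℝ)) ^ k = (-1 : ℝ) ^ k * ‖u‖ ^ (2 * k) by
      rw [neg_pow, pow_mul]]
    field_simp
  have hcomb := HasSum.even_add_odd (f := fun m : ℕ => (((m + 1) : ℕ)! : ℝ)⁻¹ • skew u ^ m)
    heven hodd
  have hfinal : (1 + ((‖u‖ - Real.sin ‖u‖) / ‖u‖ ^ 3) • skew u ^ 2)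
      + ((1 - Real.cos ‖u‖) / ‖u‖ ^ 2) • skew u = Jl u := by
    rw [Jl]; abel
  rw [← hfinal]
  exact hcomb

/-- Inclusion of `Fin 3` into `Fin 5`. -/
def ι3 (i : Fin 3) : Fin 5 := ⟨i.1, by omega⟩

lemma emb_col4 (M : Matrix (Fin 3) (Fin 3) ℝ) (a b : Fin 3 → ℝ) (i : Fin 3) :
    emb M a b (ι3 i) 4 = b i := by
  fin_cases i <;> simp [emb, ι3]

lemma se23_col4 (M : Matrix (Fin 3) (Fin 3) ℝ) (a b : V3) (i : Fin 3) :
    se23 M a b (ι3 i) 4 = b i := by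
  fin_cases i <;> simp [se23, ι3]

lemma one5_col4 (i : Fin 3) : (1 : Matrix (Fin 5) (Fin 5) ℝ) (ι3 i) 4 = 0 := by
  refine Matrix.one_apply_ne ?_
  refine Fin.ne_of_val_ne ?_
  simp [ι3]
  omega

/-- Coerce a plain vector into `V3`. -/
def toV3 (f : Fin 3 → ℝ) : V3 := WithLp.toLp 2 f

set_option maxHeartbeats 2000000 in
lemma se23_mul (R₁ R₂ : Matrix (Fin 3) (Fin 3) ℝ) (v₁ p₁ v₂ p₂ : V3) :
    se23 R₁ v₁ p₁ * se23 R₂ v₂ p₂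
      = se23 (R₁ * R₂) (toV3 ((R₁ *ᵥ fun i => v₂ i) + fun i => v₁ i))
          (toV3 ((R₁ *ᵥ fun i => p₂ i) + fun i => p₁ i)) := by
  ext i j
  rw [Matrix.mul_apply, Fin.sum_univ_five]
  fin_cases i <;> fin_cases j <;>
    simp [se23, toV3, Matrix.mul_apply, Fin.sum_univ_three,
      Matrix.mulVec, dotProduct, Matrix.vecHead, Matrix.vecTail] <;> ring_nf

lemma se23_one : se23 1 (toV3 0) (toV3 0) = 1 := by
  ext i j
  fin_cases i <;> fin_cases j <;>
    simp [se23, toV3, Matrix.one_apply, Matrix.vecHead, Matrix.vecTail]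

lemma skew_mulVec (u : V3) (y : Fin 3 → ℝ) :
    skew u *ᵥ y = ![u 1 * y 2 - u 2 * y 1, u 2 * y 0 - u 0 * y 2, u 0 * y 1 - u 1 * y 0] := by
  funext j
  fin_cases j <;>
    simp [skew, Matrix.mulVec, dotProduct, Fin.sum_univ_three] <;> ring

lemma scalar_bound (θ c s X t : ℝ) (hθ : 0 < θ) (hs : s ^ 2 = 1 - c ^ 2)
    (hK : 0 ≤ θ ^ 2 - 2 + 2 * c) (hca : t ^ 2 ≤ θ ^ 2 * X) :
    (1 - (θ - s) / θ ^ 3 * θ ^ 2) ^ 2 * X + ((θ - s) / θ ^ 3) ^ 2 * t ^ 2 * θ ^ 2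
      + ((1 - c) / θ ^ 2) ^ 2 * (θ ^ 2 * X - t ^ 2)
      + 2 * (1 - (θ - s) / θ ^ 3 * θ ^ 2) * ((θ - s) / θ ^ 3) * t ^ 2 ≤ X := by
  have hθ0 : θ ≠ 0 := hθ.ne'
  have key : (1 - (θ - s) / θ ^ 3 * θ ^ 2) ^ 2 * X + ((θ - s) / θ ^ 3) ^ 2 * t ^ 2 * θ ^ 2
      + ((1 - c) / θ ^ 2) ^ 2 * (θ ^ 2 * X - t ^ 2)
      + 2 * (1 - (θ - s) / θ ^ 3 * θ ^ 2) * ((θ - s) / θ ^ 3) * t ^ 2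
      = X - (θ ^ 2 - 2 + 2 * c) * (θ ^ 2 * X - t ^ 2) / θ ^ 4 := by
    field_simp
    linear_combination (θ ^ 2 * X - t ^ 2) * hs
  rw [key]
  have h1 : 0 ≤ (θ ^ 2 - 2 + 2 * c) * (θ ^ 2 * X - t ^ 2) / θ ^ 4 := by
    apply div_nonneg (mul_nonneg hK (by linarith)) (by positivity)
  linarith

end PosErrAux

open PosErrAux in
set_option maxHeartbeats 2000000 in
/-- if `X⁻¹X̄ = exp(ξ∧)`, then `p̄ − p = R J_ℓ(ξ_R) ξ_p` and
consequently `‖p̄ − p‖ ≤ ‖ξ_p‖`. -/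
theorem position_error_from_log (R Rb : Matrix (Fin 3) (Fin 3) ℝ) (v p vb pb : V3)
    (hR : Rᵀ * R = 1) (ξp ξv ξR : V3) (hξR : ξR ≠ 0)
    (hexp : (se23 R v p)⁻¹ * se23 Rb vb pb = NormedSpace.exp (wedge ξp ξv ξR)) :
    pb - p = Matrix.toEuclideanLin R (Matrix.toEuclideanLin (Jl ξR) ξp) ∧
    ‖pb - p‖ ≤ ‖ξp‖ := by
  have hRR : R * Rᵀ = 1 := mul_eq_one_comm.mp hR
  have hYX : se23 Rᵀ (toV3 (-(Rᵀ *ᵥ fun i => v i))) (toV3 (-(Rᵀ *ᵥ fun i => p i)))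
      * se23 R v p = 1 := by
    rw [se23_mul, hR]
    have h1 : ((Rᵀ *ᵥ fun i => v i) + fun i => toV3 (-(Rᵀ *ᵥ fun i => v i)) i)
        = (0 : Fin 3 → ℝ) := by
      funext i; simp [toV3]
    have h2 : ((Rᵀ *ᵥ fun i => p i) + fun i => toV3 (-(Rᵀ *ᵥ fun i => p i)) i)
        = (0 : Fin 3 → ℝ) := by
      funext i; simp [toV3]
    rw [h1, h2, se23_one]
  have hXinv : (se23 R v p)⁻¹
      = se23 Rᵀ (toV3 (-(Rᵀ *ᵥ fun i => v i))) (toV3 (-(Rᵀ *ᵥ fun i => p i))) :=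
    Matrix.inv_eq_left_inv hYX
  rw [hXinv, se23_mul] at hexp
  -- the relevant column of the exponential
  have hw : ∀ i : Fin 3, NormedSpace.exp (wedge ξp ξv ξR) (ι3 i) 4
      = ((Jl ξR) *ᵥ fun j => ξp j) i := by
    intro i
    have hE := hasSum_exp5 (wedge ξp ξv ξR)
    have h1 : HasSum (fun n : ℕ => (((n : ℕ)! : ℝ)⁻¹ • wedge ξp ξv ξR ^ n) (ι3 i) 4)
        (NormedSpace.exp (wedge ξp ξv ξR) (ι3 i) 4) :=
      Pi.hasSum.mp (Pi.hasSum.mp hE (ι3 i)) 4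
    have hJ := hasSum_Jl ξR hξR
    have hJe : ∀ k : Fin 3, HasSum (fun m : ℕ => ((((m + 1) : ℕ)! : ℝ)⁻¹ • skew ξR ^ m) i k)
        (Jl ξR i k) := fun k => Pi.hasSum.mp (Pi.hasSum.mp hJ i) k
    have h2 : HasSum (fun m : ℕ => (((m + 1) : ℕ)! : ℝ)⁻¹ * ((skew ξR ^ m) *ᵥ fun j => ξp j) i)
        (((Jl ξR) *ᵥ fun j => ξp j) i) := by
      have h0 := ((hJe 0).mul_right (ξp 0)).add ((hJe 1).mul_right (ξp 1))
      have hh := h0.add ((hJe 2).mul_right (ξp 2))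
      convert hh using 1
      · rfl
      · funext m
        simp [Matrix.mulVec, dotProduct, Fin.sum_univ_three, Matrix.smul_apply]
        ring
      · simp [Matrix.mulVec, dotProduct, Fin.sum_univ_three]
    have h3 : HasSum (fun n : ℕ => (((n : ℕ)! : ℝ)⁻¹ • wedge ξp ξv ξR ^ n) (ι3 i) 4)
        (((Jl ξR) *ᵥ fun j => ξp j) i) := by
      refine (hasSum_nat_add_iff'
        (f := fun n : ℕ => (((n : ℕ)! : ℝ)⁻¹ • wedge ξp ξv ξR ^ n) (ι3 i) 4) 1).mp ?_
      have hz : ∑ n ∈ Finset.range 1, (((n : ℕ)! : ℝ)⁻¹ • wedge ξp ξv ξR ^ n) (ι3 i) 4 = 0 := by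
        simp [one5_col4 i]
      rw [hz, sub_zero]
      convert h2 using 1
      · rfl
      funext m
      rw [Matrix.smul_apply, wedge_pow_succ, emb_col4]
      simp [smul_eq_mul]
    exact h1.unique h3
  -- column equality
  have hcol : Rᵀ *ᵥ (fun j => pb j - p j) = (Jl ξR) *ᵥ fun j => ξp j := by
    funext i
    have h4 := congrFun (congrFun hexp (ι3 i)) 4
    rw [se23_col4, hw i] at h4
    have h5 : (Rᵀ *ᵥ fun j => pb j - p j) i
        = toV3 ((Rᵀ *ᵥ fun j => pb j) + fun j => toV3 (-(Rᵀ *ᵥ fun j => p j)) j) i := by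
      simp [toV3, Matrix.mulVec, dotProduct, Fin.sum_univ_three]
      ring
    rw [h5, h4]
  have hfun : (fun j => pb j - p j) = R *ᵥ ((Jl ξR) *ᵥ fun j => ξp j) := by
    calc (fun j => pb j - p j) = (R * Rᵀ) *ᵥ (fun j => pb j - p j) := by
          rw [hRR, Matrix.one_mulVec]
      _ = R *ᵥ (Rᵀ *ᵥ fun j => pb j - p j) := by rw [← Matrix.mulVec_mulVec]
      _ = R *ᵥ ((Jl ξR) *ᵥ fun j => ξp j) := by rw [hcol]
  have hpart1 : pb - p = Matrix.toEuclideanLin R (Matrix.toEuclideanLin (Jl ξR) ξp) := by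
    ext j; simpa using congrFun hfun j
  refine ⟨hpart1, ?_⟩
  -- norm bound
  have hsub : ∀ j : Fin 3, (pb - p) j = (R *ᵥ ((Jl ξR) *ᵥ fun k => ξp k)) j := fun j =>
    congrFun hfun j
  set w := (Jl ξR) *ᵥ (fun k => ξp k) with hwdef
  have hRe : ∀ a b : Fin 3, R 0 a * R 0 b + R 1 a * R 1 b + R 2 a * R 2 b
      = (1 : Matrix (Fin 3) (Fin 3) ℝ) a b := by
    intro a b
    have h6 := congrFun (congrFun hR a) b
    simpa [Matrix.mul_apply, Fin.sum_univ_three, Matrix.transpose_apply, mul_comm] using h6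
  have hO : (R *ᵥ w) 0 ^ 2 + (R *ᵥ w) 1 ^ 2 + (R *ᵥ w) 2 ^ 2
      = w 0 ^ 2 + w 1 ^ 2 + w 2 ^ 2 := by
    have e00 : R 0 0 * R 0 0 + R 1 0 * R 1 0 + R 2 0 * R 2 0 = 1 := by
      simpa [Matrix.one_apply] using hRe 0 0
    have e01 : R 0 0 * R 0 1 + R 1 0 * R 1 1 + R 2 0 * R 2 1 = 0 := by
      simpa [Matrix.one_apply] using hRe 0 1
    have e02 : R 0 0 * R 0 2 + R 1 0 * R 1 2 + R 2 0 * R 2 2 = 0 := by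
      simpa [Matrix.one_apply] using hRe 0 2
    have e11 : R 0 1 * R 0 1 + R 1 1 * R 1 1 + R 2 1 * R 2 1 = 1 := by
      simpa [Matrix.one_apply] using hRe 1 1
    have e12 : R 0 1 * R 0 2 + R 1 1 * R 1 2 + R 2 1 * R 2 2 = 0 := by
      simpa [Matrix.one_apply] using hRe 1 2
    have e22 : R 0 2 * R 0 2 + R 1 2 * R 1 2 + R 2 2 * R 2 2 = 1 := by
      simpa [Matrix.one_apply] using hRe 2 2
    simp [Matrix.mulVec, dotProduct, Fin.sum_univ_three]
    linear_combination (w 0 ^ 2) * e00 + (w 1 ^ 2) * e11 + (w 2 ^ 2) * e22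
      + (2 * w 0 * w 1) * e01 + (2 * w 0 * w 2) * e02 + (2 * w 1 * w 2) * e12
  have hwj : ∀ j : Fin 3, w j = ξp j
      + ((1 - Real.cos ‖ξR‖) / ‖ξR‖ ^ 2) * ((skew ξR *ᵥ fun k => ξp k) j)
      + ((‖ξR‖ - Real.sin ‖ξR‖) / ‖ξR‖ ^ 3) * ((skew ξR *ᵥ (skew ξR *ᵥ fun k => ξp k)) j) := by
    intro j
    have hsq : (skew ξR ^ 2) *ᵥ (fun k => ξp k) = skew ξR *ᵥ (skew ξR *ᵥ fun k => ξp k) := by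
      rw [pow_two, ← Matrix.mulVec_mulVec]
    rw [hwdef, Jl, Matrix.add_mulVec, Matrix.add_mulVec, Matrix.one_mulVec,
      Matrix.smul_mulVec, Matrix.smul_mulVec, hsq]
    simp [smul_eq_mul]
  have hw0 : w 0 = ξp 0 + ((1 - Real.cos ‖ξR‖) / ‖ξR‖ ^ 2) * (ξR 1 * ξp 2 - ξR 2 * ξp 1)
      + ((‖ξR‖ - Real.sin ‖ξR‖) / ‖ξR‖ ^ 3)
        * (ξR 1 * (ξR 0 * ξp 1 - ξR 1 * ξp 0) - ξR 2 * (ξR 2 * ξp 0 - ξR 0 * ξp 2)) := by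
    rw [hwj 0, skew_mulVec, skew_mulVec]; simp
  have hw1 : w 1 = ξp 1 + ((1 - Real.cos ‖ξR‖) / ‖ξR‖ ^ 2) * (ξR 2 * ξp 0 - ξR 0 * ξp 2)
      + ((‖ξR‖ - Real.sin ‖ξR‖) / ‖ξR‖ ^ 3)
        * (ξR 2 * (ξR 1 * ξp 2 - ξR 2 * ξp 1) - ξR 0 * (ξR 0 * ξp 1 - ξR 1 * ξp 0)) := by
    rw [hwj 1, skew_mulVec, skew_mulVec]; simp
  have hw2 : w 2 = ξp 2 + ((1 - Real.cos ‖ξR‖) / ‖ξR‖ ^ 2) * (ξR 0 * ξp 1 - ξR 1 * ξp 0)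
      + ((‖ξR‖ - Real.sin ‖ξR‖) / ‖ξR‖ ^ 3)
        * (ξR 0 * (ξR 2 * ξp 0 - ξR 0 * ξp 2) - ξR 1 * (ξR 1 * ξp 2 - ξR 2 * ξp 1)) := by
    rw [hwj 2, skew_mulVec, skew_mulVec]; simp
  have hθ2 := norm_sq_V3 ξR
  have hθ : (0:ℝ) < ‖ξR‖ := norm_pos_iff.mpr hξR
  have hsin := Real.sin_sq ‖ξR‖
  have hK : 0 ≤ ‖ξR‖ ^ 2 - 2 + 2 * Real.cos ‖ξR‖ := by
    have := Real.one_sub_sq_div_two_le_cos (x := ‖ξR‖); linarith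
  have hca : (ξR 0 * ξp 0 + ξR 1 * ξp 1 + ξR 2 * ξp 2) ^ 2
      ≤ ‖ξR‖ ^ 2 * (ξp 0 ^ 2 + ξp 1 ^ 2 + ξp 2 ^ 2) := by
    rw [hθ2]
    nlinarith [sq_nonneg (ξR 0 * ξp 1 - ξR 1 * ξp 0), sq_nonneg (ξR 0 * ξp 2 - ξR 2 * ξp 0),
      sq_nonneg (ξR 1 * ξp 2 - ξR 2 * ξp 1)]
  have hbound := scalar_bound ‖ξR‖ (Real.cos ‖ξR‖) (Real.sin ‖ξR‖)
    (ξp 0 ^ 2 + ξp 1 ^ 2 + ξp 2 ^ 2) (ξR 0 * ξp 0 + ξR 1 * ξp 1 + ξR 2 * ξp 2)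
    hθ hsin hK hca
  have hJb : w 0 ^ 2 + w 1 ^ 2 + w 2 ^ 2 ≤ ξp 0 ^ 2 + ξp 1 ^ 2 + ξp 2 ^ 2 := by
    have hexpand : w 0 ^ 2 + w 1 ^ 2 + w 2 ^ 2
        = (1 - (‖ξR‖ - Real.sin ‖ξR‖) / ‖ξR‖ ^ 3 * (ξR 0 ^ 2 + ξR 1 ^ 2 + ξR 2 ^ 2)) ^ 2
            * (ξp 0 ^ 2 + ξp 1 ^ 2 + ξp 2 ^ 2)
          + ((‖ξR‖ - Real.sin ‖ξR‖) / ‖ξR‖ ^ 3) ^ 2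
            * (ξR 0 * ξp 0 + ξR 1 * ξp 1 + ξR 2 * ξp 2) ^ 2 * (ξR 0 ^ 2 + ξR 1 ^ 2 + ξR 2 ^ 2)
          + ((1 - Real.cos ‖ξR‖) / ‖ξR‖ ^ 2) ^ 2
            * ((ξR 0 ^ 2 + ξR 1 ^ 2 + ξR 2 ^ 2) * (ξp 0 ^ 2 + ξp 1 ^ 2 + ξp 2 ^ 2)
                - (ξR 0 * ξp 0 + ξR 1 * ξp 1 + ξR 2 * ξp 2) ^ 2)
          + 2 * (1 - (‖ξR‖ - Real.sin ‖ξR‖) / ‖ξR‖ ^ 3 * (ξR 0 ^ 2 + ξR 1 ^ 2 + ξR 2 ^ 2))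
            * ((‖ξR‖ - Real.sin ‖ξR‖) / ‖ξR‖ ^ 3)
            * (ξR 0 * ξp 0 + ξR 1 * ξp 1 + ξR 2 * ξp 2) ^ 2 := by
      rw [hw0, hw1, hw2]; ring
    rw [hexpand, ← hθ2]
    exact hbound
  have hfinal2 : ‖pb - p‖ ^ 2 ≤ ‖ξp‖ ^ 2 := by
    rw [norm_sq_V3 (pb - p), norm_sq_V3 ξp, hsub 0, hsub 1, hsub 2, hO]
    exact hJb
  have hsqrt := Real.sqrt_le_sqrt hfinal2
  rwa [Real.sqrt_sq (norm_nonneg _), Real.sqrt_sq (norm_nonneg _)] at hsqrt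
end
end
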